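/- Suppose q and q̄ are continuous real-valued functions on [0, ε₁] satisfying q(z)² = -2∫₀¹ t q(zt) dt + 2 - 2z + z²/2 (and likewise for q̄), and suppose there are M₁ > 0, ε₁ > 0 with M₁ε₁ < 2/3 such that |q(z) - 1| ≤ M₁ z and |q̄(z) - 1| ≤ M₁ z for 0 ≤ z ≤ ε₁. Then |q(z) - q̄(z)| ≤ 2 M₁ γ₁ⁿ |z| for all integers n > 0 and 0 ≤ z ≤ ε₁, where γ₁ = 1/(3(1 - M₁ε₁)). -/

import Mathlib

open Set intervalIntegral

theorem stmt_1 (ε₁ M₁ : ℝ) (hM₁ : 0 < M₁) (hε₁ : 0 < ε₁) (hMε : M₁ * ε₁ < 2 / 3)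
    (q qbar : ℝ → ℝ)
    (hqc : ContinuousOn q (Icc 0 ε₁)) (hqbc : ContinuousOn qbar (Icc 0 ε₁))
    (hq : ∀ z ∈ Icc (0 : ℝ) ε₁,
      (q z) ^ 2 = -2 * (∫ t in (0 : ℝ)..1, t * q (z * t)) + 2 - 2 * z + z ^ 2 / 2)
    (hqb : ∀ z ∈ Icc (0 : ℝ) ε₁,
      (qbar z) ^ 2 = -2 * (∫ t in (0 : ℝ)..1, t * qbar (z * t)) + 2 - 2 * z + z ^ 2 / 2)
    (hq1 : ∀ z ∈ Icc (0 : ℝ) ε₁, |q z - 1| ≤ M₁ * z)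
    (hqb1 : ∀ z ∈ Icc (0 : ℝ) ε₁, |qbar z - 1| ≤ M₁ * z) :
    ∀ n : ℕ, 0 < n → ∀ z ∈ Icc (0 : ℝ) ε₁,
      |q z - qbar z| ≤ 2 * M₁ * (1 / (3 * (1 - M₁ * ε₁))) ^ n * |z| := by
  set γ : ℝ := 1 / (3 * (1 - M₁ * ε₁)) with hγdef
  have hpos : 0 < 1 - M₁ * ε₁ := by nlinarith
  have hγ : 0 < γ := by positivity
  suffices h : ∀ n : ℕ, ∀ z ∈ Icc (0 : ℝ) ε₁, |q z - qbar z| ≤ 2 * M₁ * γ ^ n * z by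
    intro n _ z hz
    have := h n z hz
    rwa [abs_of_nonneg hz.1]
  intro n
  induction n with
  | zero =>
    intro z hz
    have h1 := hq1 z hz
    have h2 := hqb1 z hz
    have : |q z - qbar z| ≤ |q z - 1| + |qbar z - 1| := by
      calc |q z - qbar z| = |(q z - 1) - (qbar z - 1)| := by ring_nf
        _ ≤ |q z - 1| + |qbar z - 1| := abs_sub _ _
    simp only [pow_zero]
    linarith
  | succ n ih =>
    intro z hz
    obtain ⟨hz0, hzε⟩ := hz
    -- maps
    have hmaps : ∀ t ∈ Icc (0:ℝ) 1, z * t ∈ Icc (0:ℝ) ε₁ := by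
      intro t ht
      exact ⟨mul_nonneg hz0 ht.1, by nlinarith [ht.1, ht.2]⟩
    have huIcc : uIcc (0:ℝ) 1 = Icc 0 1 := uIcc_of_le zero_le_one
    have hcontq : ContinuousOn (fun t => t * q (z * t)) (Icc (0:ℝ) 1) := by
      apply ContinuousOn.mul continuousOn_id
      exact hqc.comp ((continuous_const.mul continuous_id).continuousOn) hmaps
    have hcontqb : ContinuousOn (fun t => t * qbar (z * t)) (Icc (0:ℝ) 1) := by
      apply ContinuousOn.mul continuousOn_id
      exact hqbc.comp ((continuous_const.mul continuous_id).continuousOn) hmaps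
    have hintq : IntervalIntegrable (fun t => t * q (z * t)) MeasureTheory.volume 0 1 :=
      (hcontq.mono huIcc.subset).intervalIntegrable
    have hintqb : IntervalIntegrable (fun t => t * qbar (z * t)) MeasureTheory.volume 0 1 :=
      (hcontqb.mono huIcc.subset).intervalIntegrable
    -- key identity
    have key : (q z - qbar z) * (q z + qbar z)
        = -2 * ∫ t in (0:ℝ)..1, (t * q (z * t) - t * qbar (z * t)) := by
      rw [intervalIntegral.integral_sub hintq hintqb]
      have e1 := hq z ⟨hz0, hzε⟩
      have e2 := hqb z ⟨hz0, hzε⟩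
      nlinarith [e1, e2]
    -- pointwise bound on integrand
    have hptw : ∀ t ∈ Icc (0:ℝ) 1, |t * q (z * t) - t * qbar (z * t)|
        ≤ 2 * M₁ * γ ^ n * z * t ^ 2 := by
      intro t ht
      have hΔ := ih (z * t) (hmaps t ht)
      have ht0 : 0 ≤ t := ht.1
      calc |t * q (z * t) - t * qbar (z * t)| = |t| * |q (z * t) - qbar (z * t)| := by
            rw [← abs_mul]; ring_nf
        _ = t * |q (z * t) - qbar (z * t)| := by rw [abs_of_nonneg ht0]
        _ ≤ t * (2 * M₁ * γ ^ n * (z * t)) := by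
            apply mul_le_mul_of_nonneg_left hΔ ht0
        _ = 2 * M₁ * γ ^ n * z * t ^ 2 := by ring
    -- integral bound
    have hintbound : |∫ t in (0:ℝ)..1, (t * q (z * t) - t * qbar (z * t))|
        ≤ 2 * M₁ * γ ^ n * z * (1 / 3) := by
      have hg : (∫ t in (0:ℝ)..1, 2 * M₁ * γ ^ n * z * t ^ 2)
          = 2 * M₁ * γ ^ n * z * (1 / 3) := by
        rw [intervalIntegral.integral_const_mul, integral_pow]
        norm_num
      have hb := intervalIntegral.norm_integral_le_abs_of_norm_le (μ := MeasureTheory.volume)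
        (f := fun t => t * q (z * t) - t * qbar (z * t))
        (g := fun t => 2 * M₁ * γ ^ n * z * t ^ 2) (a := 0) (b := 1)
        ?_ ?_
      · rw [Real.norm_eq_abs] at hb
        refine hb.trans ?_
        rw [hg, abs_of_nonneg (by positivity)]
      · filter_upwards [MeasureTheory.ae_restrict_mem measurableSet_uIoc] with t ht
        have htI : t ∈ Icc (0:ℝ) 1 := Ioc_subset_Icc_self (by simpa [uIoc] using ht)
        simpa [Real.norm_eq_abs] using hptw t htI
      · exact (Continuous.intervalIntegrable (by continuity) 0 1)
    -- sum lower bound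
    have hqlb : 1 - M₁ * ε₁ ≤ q z := by
      have := hq1 z ⟨hz0, hzε⟩
      have h1 : |q z - 1| ≤ M₁ * ε₁ := this.trans (by nlinarith)
      have := abs_le.mp h1
      linarith [this.1]
    have hqblb : 1 - M₁ * ε₁ ≤ qbar z := by
      have := hqb1 z ⟨hz0, hzε⟩
      have h1 : |qbar z - 1| ≤ M₁ * ε₁ := this.trans (by nlinarith)
      have := abs_le.mp h1
      linarith [this.1]
    have hsum : 2 * (1 - M₁ * ε₁) ≤ q z + qbar z := by linarith
    have hsumpos : 0 < q z + qbar z := by linarith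
    -- combine
    have habs : |q z - qbar z| * (q z + qbar z)
        ≤ 2 * (2 * M₁ * γ ^ n * z * (1 / 3)) := by
      have : |q z - qbar z| * (q z + qbar z) = |(q z - qbar z) * (q z + qbar z)| := by
        rw [abs_mul, abs_of_pos hsumpos]
      rw [this, key, abs_mul]
      calc |(-2 : ℝ)| * |∫ t in (0:ℝ)..1, (t * q (z * t) - t * qbar (z * t))|
          = 2 * |∫ t in (0:ℝ)..1, (t * q (z * t) - t * qbar (z * t))| := by norm_num
        _ ≤ 2 * (2 * M₁ * γ ^ n * z * (1 / 3)) := by linarith [hintbound]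
    have hγn : 0 ≤ γ ^ n := le_of_lt (pow_pos hγ n)
    have habsnn : 0 ≤ |q z - qbar z| := abs_nonneg _
    have step : |q z - qbar z| * (2 * (1 - M₁ * ε₁)) ≤ 2 * (2 * M₁ * γ ^ n * z * (1 / 3)) := by
      calc |q z - qbar z| * (2 * (1 - M₁ * ε₁)) ≤ |q z - qbar z| * (q z + qbar z) :=
            mul_le_mul_of_nonneg_left hsum habsnn
        _ ≤ _ := habs
    have hγmul : γ * (3 * (1 - M₁ * ε₁)) = 1 := by
      rw [hγdef]; field_simp
    rw [pow_succ]
    have hfin : |q z - qbar z| ≤ 2 * (2 * M₁ * γ ^ n * z * (1 / 3)) / (2 * (1 - M₁ * ε₁)) := by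
      rw [le_div_iff₀ (by positivity)]
      exact step
    have heq : 2 * (2 * M₁ * γ ^ n * z * (1 / 3)) / (2 * (1 - M₁ * ε₁))
        = 2 * M₁ * (γ ^ n * γ) * z := by
      rw [div_eq_iff (by positivity : (0:ℝ) < 2 * (1 - M₁ * ε₁)).ne']
      linear_combination (-4 / 3 * M₁ * γ ^ n * z) * hγmul
    exact hfin.trans_eq heq
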